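/- For any finite group G and any positive integer n, the number of elements of G whose n-th power lies in a fixed subgroup A of G is divisible by |A|. -/

import Mathlib

open MulAction

section Aux
variable {G : Type*} [Group G] (A : Subgroup G) (n : ℕ) [NeZero n]

/-- the base point of `G ⧸ A` -/
private def bp : G ⧸ A := ((1 : G) : G ⧸ A)

private lemma smul_bp_iff (g : G) : g • (bp A) = bp A ↔ g ∈ A := by
  show g • ((1 : G) : G ⧸ A) = ((1 : G) : G ⧸ A) ↔ _
  rw [MulAction.Quotient.smul_mk, QuotientGroup.eq]
  simp

/-- the walk of `x` through `G ⧸ A` -/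
private def walk (x : G) : ZMod n → G ⧸ A := fun i => x ^ i.val • bp A

private def Tpred (f : ZMod n → G ⧸ A) (x : G) : Prop := ∀ i : ZMod n, x • f i = f (i + 1)

private lemma walk_of_Tpred {f : ZMod n → G ⧸ A} {x : G} (h0 : f 0 = bp A)
    (hT : Tpred A n f x) : ∀ k : ℕ, f (k : ZMod n) = x ^ k • bp A := by
  intro k
  induction k with
  | zero => simpa using h0
  | succ k ih =>
      have : ((k + 1 : ℕ) : ZMod n) = (k : ZMod n) + 1 := by push_cast; ring
      rw [this, ← hT, ih, ← mul_smul, ← pow_succ']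

private lemma pow_mem_of_Tpred {f : ZMod n → G ⧸ A} {x : G} (h0 : f 0 = bp A)
    (hT : Tpred A n f x) : x ^ n ∈ A := by
  rw [← smul_bp_iff A]
  have := walk_of_Tpred A n h0 hT n
  rw [ZMod.natCast_self, h0] at this
  exact this.symm

private lemma walk_eq_of_Tpred {f : ZMod n → G ⧸ A} {x : G} (h0 : f 0 = bp A)
    (hT : Tpred A n f x) : walk A n x = f := by
  funext i
  have : f ((i.val : ℕ) : ZMod n) = x ^ i.val • bp A := walk_of_Tpred A n h0 hT i.val
  rw [ZMod.natCast_rightInverse i] at this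
  exact this.symm

private lemma pow_smul_mod {x : G} (hx : x ^ n ∈ A) (k : ℕ) :
    x ^ k • bp A = x ^ (k % n) • bp A := by
  have hstep : ∀ m : ℕ, x ^ (n + m) • bp A = x ^ m • bp A := by
    intro m
    rw [add_comm, pow_add, mul_smul, (smul_bp_iff A _).2 hx]
  conv_lhs => rw [← Nat.div_add_mod k n]
  generalize k / n = q
  induction q with
  | zero => simp
  | succ q ih =>
      have : n * (q + 1) + k % n = n + (n * q + k % n) := by ring
      rw [this, hstep, ih]

private lemma Tpred_walk {x : G} (hx : x ^ n ∈ A) : Tpred A n (walk A n x) x := by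
  intro i
  show x • x ^ i.val • bp A = x ^ (i + 1).val • bp A
  rw [← mul_smul, ← pow_succ']
  rw [pow_smul_mod A n hx (i.val + 1), pow_smul_mod A n hx (i + 1).val]
  have : (i.val + 1) % n = (i + 1).val % n := by
    rw [ZMod.val_add, Nat.mod_mod_of_dvd _ dvd_rfl, ZMod.val_one_eq_one_mod]
    conv_lhs => rw [Nat.add_mod]
    conv_rhs => rw [Nat.add_mod]
    rw [Nat.mod_mod_of_dvd _ dvd_rfl]
  rw [this]

private lemma Tpred_conj {f : ZMod n → G ⧸ A} {x : G} (hT : Tpred A n f x) (a : A) :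
    Tpred A n (a • f) ((a : G) * x * (a : G)⁻¹) := by
  intro i
  show ((a : G) * x * (a : G)⁻¹) • (a : G) • f i = (a : G) • f (i + 1)
  rw [← mul_smul, inv_mul_cancel_right, mul_smul, hT i]

private def TEquiv {f : ZMod n → G ⧸ A} (h0 : f 0 = bp A) {x₀ : G} (hx₀ : Tpred A n f x₀) :
    {x : G // Tpred A n f x} ≃ MulAction.stabilizer A f where
  toFun x := ⟨⟨x₀⁻¹ * x.1, by
      have hfix : (x₀⁻¹ * x.1) • f 0 = f 0 := by
        rw [mul_smul, x.2 0, eq_comm, eq_inv_smul_iff, hx₀ 0]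
      rw [← smul_bp_iff A, ← h0]
      exact hfix⟩, by
      have : ∀ i : ZMod n, (x₀⁻¹ * x.1) • f i = f i := by
        intro i
        rw [mul_smul, x.2 i, eq_comm, eq_inv_smul_iff, hx₀ i]
      show _ • f = f
      funext i
      exact this i⟩
  invFun a := ⟨x₀ * (a.1 : G), by
      intro i
      have ha : (a.1 : G) • f i = f i := congrFun a.2 i
      rw [mul_smul, ha, hx₀ i]⟩
  left_inv x := by
    ext
    simp
  right_inv a := by
    ext
    simp

end Aux


theorem stmt_2 (G : Type*) [Group G] [Fintype G] (A : Subgroup G) (n : ℕ) (hn : 0 < n) :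
    Nat.card A ∣ Nat.card {g : G // g ^ n ∈ A} := by
  classical
  haveI : NeZero n := ⟨hn.ne'⟩
  haveI : Fintype (G ⧸ A) := Fintype.ofFinite _
  set Y := (ZMod n → G ⧸ A) with hY
  haveI : Fintype Y := by rw [hY]; infer_instance
  set Q := Quotient (MulAction.orbitRel A Y) with hQ
  haveI : Fintype Q := Fintype.ofFinite _
  set s : Finset G := Finset.univ.filter (fun x => x ^ n ∈ A) with hs
  have hcardS : Nat.card {g : G // g ^ n ∈ A} = s.card := by
    rw [Nat.card_eq_fintype_card, Fintype.card_subtype]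
  rw [hcardS, Nat.card_eq_fintype_card]
  have hfiber := Finset.card_eq_sum_card_fiberwise
    (f := fun x : G => (⟦walk A n x⟧ : Q)) (s := s) (t := Finset.univ)
    (fun x _ => Finset.mem_univ _)
  rw [hfiber]
  refine Finset.dvd_sum fun q _ => ?_
  rcases Finset.eq_empty_or_nonempty (s.filter fun x => (⟦walk A n x⟧ : Q) = q)
    with he | ⟨x₁, hx₁⟩
  · simp [he]
  rw [Finset.mem_filter] at hx₁
  obtain ⟨hx₁s, hq⟩ := hx₁
  rw [hs, Finset.mem_filter] at hx₁s
  have hx₁A : x₁ ^ n ∈ A := hx₁s.2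
  set f₁ := walk A n x₁ with hf₁
  have hf₁0 : f₁ 0 = bp A := by
    show x₁ ^ (0 : ZMod n).val • bp A = bp A
    rw [ZMod.val_zero, pow_zero, one_smul]
  have hT₁ : Tpred A n f₁ x₁ := Tpred_walk A n hx₁A
  haveI : Fintype (MulAction.orbit A f₁) := Fintype.ofFinite _
  set t : Finset Y := (MulAction.orbit A f₁).toFinset with ht
  have h2 := Finset.card_eq_sum_card_fiberwise
    (f := fun x : G => walk A n x) (s := s.filter fun x => (⟦walk A n x⟧ : Q) = q)
    (t := t) (fun x hx => by
      rw [Finset.mem_coe, Finset.mem_filter] at hx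
      rw [Finset.mem_coe, ht, Set.mem_toFinset]
      exact (MulAction.orbitRel_apply (G := A)).mp (Quotient.eq''.mp (hx.2.trans hq.symm)))
  rw [h2]
  have hstep : ∀ f ∈ t, ((s.filter fun x => (⟦walk A n x⟧ : Q) = q).filter
      fun x => walk A n x = f).card = Nat.card (MulAction.stabilizer A f) := by
    intro f hf
    rw [ht, Set.mem_toFinset, MulAction.mem_orbit_iff] at hf
    obtain ⟨a, rfl⟩ := hf
    have h0f : (a • f₁) 0 = bp A := by
      show (a : G) • f₁ 0 = bp A
      rw [hf₁0, smul_bp_iff]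
      exact a.2
    have hTf : Tpred A n (a • f₁) ((a : G) * x₁ * (a : G)⁻¹) := Tpred_conj A n hT₁ a
    have hfe : ((s.filter fun x => (⟦walk A n x⟧ : Q) = q).filter
        fun x => walk A n x = a • f₁) = Finset.univ.filter (fun x => Tpred A n (a • f₁) x) := by
      ext x
      simp only [Finset.mem_filter, Finset.mem_univ, true_and, hs]
      constructor
      · rintro ⟨⟨hxA, -⟩, hw⟩
        exact hw ▸ Tpred_walk A n hxA
      · intro hT
        have hxA : x ^ n ∈ A := pow_mem_of_Tpred A n h0f hT
        have hwe : walk A n x = a • f₁ := walk_eq_of_Tpred A n h0f hT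
        refine ⟨⟨hxA, ?_⟩, hwe⟩
        rw [hwe, ← hq]
        exact Quotient.sound' (MulAction.orbitRel_apply.mpr (MulAction.mem_orbit _ _))
    rw [hfe]
    have : (Finset.univ.filter (fun x => Tpred A n (a • f₁) x)).card
        = Fintype.card {x : G // Tpred A n (a • f₁) x} := (Fintype.card_subtype _).symm
    rw [this, ← Nat.card_eq_fintype_card, Nat.card_congr (TEquiv A n h0f hTf)]
  rw [Finset.sum_congr rfl hstep]
  have hconst : ∀ f ∈ t, Nat.card (MulAction.stabilizer A f)
      = Nat.card (MulAction.stabilizer A f₁) := by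
    intro f hf
    rw [ht, Set.mem_toFinset] at hf
    exact Nat.card_congr (MulAction.stabilizerEquivStabilizerOfOrbitRel
      (MulAction.orbitRel_apply.mpr hf)).toEquiv
  rw [Finset.sum_congr rfl hconst, Finset.sum_const, smul_eq_mul, ht, Set.toFinset_card]
  haveI : Fintype (MulAction.stabilizer A f₁) := Fintype.ofFinite _
  rw [Nat.card_eq_fintype_card]
  exact dvd_of_eq (by convert (MulAction.card_orbit_mul_card_stabilizer_eq_card_group (↥A) f₁).symm <;> rfl)
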